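/- arXiv:0910.1623 — 2 statements merged into one kernel-verified Lean document; each statement's English description precedes it below -/
import Mathlib

section
/- Under the setup of the previous statement (T, Δ disjoint, RIP constants satisfying 1 − δ_{|Δ|} − θ_{|Δ|,|T|}²/(1−δ_{|T|}) > 0), the ℓ² error bound of modified-BPDN restricted to N_e = T∪Δ satisfies: ‖b̃ − c‖₂ ≤ γ √|Δ| · √( θ_{|T|,|Δ|}²/(1−δ_{|T|})² + 1 ) · 1/(1 − δ_{|Δ|} − θ_{|Δ|,|T|}²/(1−δ_{|T|})), where b̃ minimizes L(b) = (1/2)‖y−Ab‖₂² + γ‖b_{T^c}‖₁ over vectors supported on N_e and c is the least-squares estimate on N_e. -/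
open Matrix Finset

noncomputable section

variable {n m : ℕ}

/-- Submatrix of columns of `A` indexed by `S`. -/
def cols (A : Matrix (Fin n) (Fin m) ℝ) (S : Finset (Fin m)) :
    Matrix (Fin n) {j // j ∈ S} ℝ := Matrix.of fun i j => A i j.1

/-- Subvector of `b` on indices in `S`. -/
def subv (b : Fin m → ℝ) (S : Finset (Fin m)) : {j // j ∈ S} → ℝ := fun j => b j.1

/-- `b` is supported on `S`. -/
def suppOn (b : Fin m → ℝ) (S : Finset (Fin m)) : Prop := ∀ j, j ∉ S → b j = 0

def l2v {k : Type*} [Fintype k] (v : k → ℝ) : ℝ := Real.sqrt (∑ i, v i ^ 2)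

def l1v {k : Type*} [Fintype k] (v : k → ℝ) : ℝ := ∑ i, |v i|

def linfv {k : Type*} [Fintype k] (v : k → ℝ) : ℝ := ⨆ i, |v i|

/-- ℓ¹ norm of the subvector of `b` on the complement of `T`. -/
def l1c (b : Fin m → ℝ) (T : Finset (Fin m)) : ℝ := ∑ j ∈ Tᶜ, |b j|

/-- Induced ℓ∞→ℓ∞ operator norm (max absolute row sum). -/
def matInf {k l : Type*} [Fintype k] [Fintype l] (B : Matrix k l ℝ) : ℝ :=
  ⨆ i, ∑ j, |B i j|

/-- Spectral norm (ℓ²→ℓ² operator norm). -/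
def spec {k l : Type*} [Fintype k] [Fintype l] (B : Matrix k l ℝ) : ℝ :=
  sSup ((fun x => l2v (B.mulVec x)) '' {x | l2v x ≤ 1})

/-- The modified-BPDN objective L(b) = (1/2)‖y − Ab‖₂² + γ‖b_{Tᶜ}‖₁. -/
def objL (A : Matrix (Fin n) (Fin m) ℝ) (y : Fin n → ℝ) (γ : ℝ) (T : Finset (Fin m))
    (b : Fin m → ℝ) : ℝ :=
  (1/2) * (∑ i, (y i - A.mulVec b i) ^ 2) + γ * l1c b T

/-- Orthogonal projector M = I − A_T (A_Tᵀ A_T)⁻¹ A_Tᵀ. -/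
def projM (A : Matrix (Fin n) (Fin m) ℝ) (T : Finset (Fin m)) : Matrix (Fin n) (Fin n) ℝ :=
  1 - cols A T * ((cols A T)ᵀ * cols A T)⁻¹ * (cols A T)ᵀ

/-- Least squares coefficients on `S` : (A_Sᵀ A_S)⁻¹ A_Sᵀ y. -/
def lsq (A : Matrix (Fin n) (Fin m) ℝ) (S : Finset (Fin m)) (y : Fin n → ℝ) :
    {j // j ∈ S} → ℝ :=
  ((cols A S)ᵀ * cols A S)⁻¹.mulVec ((cols A S)ᵀ.mulVec y)

/-- Least squares estimate on `S`, as a vector in ℝᵐ supported on `S`. -/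
def lsqFull (A : Matrix (Fin n) (Fin m) ℝ) (S : Finset (Fin m)) (y : Fin n → ℝ) :
    Fin m → ℝ := fun j => if h : j ∈ S then lsq A S y ⟨j, h⟩ else 0

/-- The matrix A_Δᵀ M A_Δ. -/
def schur (A : Matrix (Fin n) (Fin m) ℝ) (T Δ : Finset (Fin m)) :
    Matrix {j // j ∈ Δ} {j // j ∈ Δ} ℝ :=
  (cols A Δ)ᵀ * projM A T * cols A Δ

/-- The matrix (A_Tᵀ A_T)⁻¹ A_Tᵀ A_Δ (A_Δᵀ M A_Δ)⁻¹. -/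
def crossMat (A : Matrix (Fin n) (Fin m) ℝ) (T Δ : Finset (Fin m)) :
    Matrix {j // j ∈ T} {j // j ∈ Δ} ℝ :=
  ((cols A T)ᵀ * cols A T)⁻¹ * ((cols A T)ᵀ * cols A Δ) * (schur A T Δ)⁻¹

/-- The exact-recovery-coefficient quantity ‖(A_Δᵀ M A_Δ)⁻¹ A_Δᵀ M A_ω‖₁. -/
def erc (A : Matrix (Fin n) (Fin m) ℝ) (T Δ : Finset (Fin m)) (ω : Fin m) : ℝ :=
  l1v ((schur A T Δ)⁻¹.mulVec (((cols A Δ)ᵀ * projM A T).mulVec (fun i => A i ω)))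

/-- `δ` is a valid S-restricted isometry constant for `A`. -/
def RIP (A : Matrix (Fin n) (Fin m) ℝ) (S : ℕ) (δ : ℝ) : Prop :=
  0 ≤ δ ∧ ∀ (J : Finset (Fin m)), J.card ≤ S → ∀ x : Fin m → ℝ, suppOn x J →
    (1 - δ) * (∑ i, x i ^ 2) ≤ (∑ i, (A.mulVec x i) ^ 2) ∧
    (∑ i, (A.mulVec x i) ^ 2) ≤ (1 + δ) * (∑ i, x i ^ 2)

/-- `θ` is a valid (S,S')-restricted orthogonality constant for `A`. -/
def ROC (A : Matrix (Fin n) (Fin m) ℝ) (S S' : ℕ) (θ : ℝ) : Prop :=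
  0 ≤ θ ∧ ∀ (J J' : Finset (Fin m)), Disjoint J J' → J.card ≤ S → J'.card ≤ S' →
    ∀ x x' : Fin m → ℝ, suppOn x J → suppOn x' J' →
      |dotProduct (A.mulVec x) (A.mulVec x')| ≤ θ * l2v x * l2v x'

/-- `b` minimizes the modified-BPDN objective over vectors supported on `S`. -/
def IsRestrMin (A : Matrix (Fin n) (Fin m) ℝ) (y : Fin n → ℝ) (γ : ℝ)
    (T S : Finset (Fin m)) (b : Fin m → ℝ) : Prop :=
  suppOn b S ∧ ∀ b', suppOn b' S → objL A y γ T b ≤ objL A y γ T b'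

/-- `g` is a subgradient of `b ↦ ‖b_{Tᶜ}‖₁` at `b`. -/
def IsSubgrad (T : Finset (Fin m)) (b g : Fin m → ℝ) : Prop :=
  (∀ j, j ∈ T → g j = 0) ∧
  ∀ j, j ∉ T → |g j| ≤ 1 ∧ (b j ≠ 0 → g j = Real.sign (b j))


section helpersX
variable {n m : ℕ}

lemma l2v_nonnegX {k : Type*} [Fintype k] (v : k → ℝ) : 0 ≤ l2v v := Real.sqrt_nonneg _

lemma sq_l2vX {k : Type*} [Fintype k] (v : k → ℝ) : l2v v ^ 2 = ∑ i, v i ^ 2 :=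
  Real.sq_sqrt (Finset.sum_nonneg fun i _ => sq_nonneg _)

lemma mulVec_suppOnX (A : Matrix (Fin n) (Fin m) ℝ) (S : Finset (Fin m)) (b : Fin m → ℝ)
    (hb : suppOn b S) : A.mulVec b = (cols A S).mulVec (subv b S) := by
  funext i
  simp only [Matrix.mulVec, dotProduct, cols, subv, Matrix.of_apply]
  rw [Finset.sum_coe_sort S (fun j => A i j * b j)]
  exact (Finset.sum_subset (Finset.subset_univ S)
    (fun j _ hj => by rw [hb j hj, mul_zero])).symm

lemma dot_mulVec_suppOnX (A : Matrix (Fin n) (Fin m) ℝ) (J : Finset (Fin m)) (z : Fin m → ℝ)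
    (hz : suppOn z J) (v : Fin n → ℝ) :
    dotProduct (A.mulVec z) v = ∑ j ∈ J, z j * ∑ i, A i j * v i := by
  have h1 : dotProduct (A.mulVec z) v = ∑ j : Fin m, z j * ∑ i, A i j * v i := by
    simp only [dotProduct, Matrix.mulVec, Finset.sum_mul]
    rw [Finset.sum_comm]
    exact Finset.sum_congr rfl fun j _ => by
      rw [Finset.mul_sum]; exact Finset.sum_congr rfl fun i _ => by ring
  rw [h1]
  exact (Finset.sum_subset (Finset.subset_univ J)
    (fun j _ hj => by rw [hz j hj, zero_mul])).symm

lemma quad_zeroX (S C : ℝ) (hC : 0 ≤ C) (h : ∀ t : ℝ, 0 ≤ t * S + t ^ 2 * C / 2) : S = 0 := by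
  have h1 := h (-(S / (C + 1)))
  have hC1 : (0:ℝ) < C + 1 := by linarith
  have h2 : S ^ 2 * (C + 2) ≤ 0 := by
    have e : -(S / (C + 1)) * S + (-(S / (C + 1))) ^ 2 * C / 2
        = (-(2 * (C + 1)) * S ^ 2 + S ^ 2 * C) / (2 * (C + 1) ^ 2) := by
      field_simp
    rw [e] at h1
    have h3 : 0 ≤ -(2 * (C + 1)) * S ^ 2 + S ^ 2 * C := by
      have := (div_nonneg_iff.mp h1)
      rcases this with ⟨h4, _⟩ | ⟨_, h5⟩
      · exact h4
      · nlinarith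
    nlinarith
  nlinarith [sq_nonneg S]

lemma quad_absX (S C γ : ℝ) (hC : 0 ≤ C) (hγ : 0 ≤ γ)
    (h : ∀ t : ℝ, 0 ≤ t * S + t ^ 2 * C / 2 + γ * |t|) : |S| ≤ γ := by
  rw [abs_le]
  constructor
  · by_contra hc
    push_neg at hc
    have hd : 0 < -S - γ := by linarith
    have hC2 : (0:ℝ) < C + 2 := by linarith
    set ε : ℝ := 2 * (-S - γ) / (C + 2) with hε
    have hεpos : 0 < ε := by positivity
    have h1 := h ε
    rw [abs_of_pos hεpos] at h1
    have hkey : ε * (C + 2) = 2 * (-S - γ) := by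
      rw [hε]; field_simp
    nlinarith [mul_pos hεpos hεpos, mul_pos hεpos hεpos]
  · by_contra hc
    push_neg at hc
    have hd : 0 < S - γ := by linarith
    have hC2 : (0:ℝ) < C + 2 := by linarith
    set ε : ℝ := 2 * (S - γ) / (C + 2) with hε
    have hεpos : 0 < ε := by positivity
    have h1 := h (-ε)
    rw [abs_neg, abs_of_pos hεpos] at h1
    have hkey : ε * (C + 2) = 2 * (S - γ) := by
      rw [hε]; field_simp
    nlinarith [mul_pos hεpos hεpos]

lemma opt_condX (A : Matrix (Fin n) (Fin m) ℝ) (T Δ : Finset (Fin m)) (γ : ℝ) (hγ : 0 < γ)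
    (y : Fin n → ℝ) (btil : Fin m → ℝ) (hmin : IsRestrMin A y γ T (T ∪ Δ) btil)
    (j : Fin m) (hj : j ∈ T ∪ Δ) :
    (j ∈ T → ∑ i, A i j * (A.mulVec btil i - y i) = 0) ∧
    (j ∉ T → |∑ i, A i j * (A.mulVec btil i - y i)| ≤ γ) := by
  classical
  set S := ∑ i, A i j * (A.mulVec btil i - y i) with hS
  set C := ∑ i, A i j ^ 2 with hCdef
  have hC : 0 ≤ C := Finset.sum_nonneg fun i _ => sq_nonneg _
  have key : ∀ t : ℝ, 0 ≤ t * S + t ^ 2 * C / 2 +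
      γ * (if j ∈ T then 0 else |btil j + t| - |btil j|) := by
    intro t
    set b' : Fin m → ℝ := fun k => btil k + if k = j then t else 0 with hb'
    have hsupp : suppOn b' (T ∪ Δ) := by
      intro k hk
      have hne : k ≠ j := fun h => hk (h ▸ hj)
      simp [hb', hmin.1 k hk, hne]
    have hobj := hmin.2 b' hsupp
    have hmv : ∀ i, A.mulVec b' i = A.mulVec btil i + A i j * t := by
      intro i
      simp only [hb', Matrix.mulVec, dotProduct, mul_add, Finset.sum_add_distrib, mul_ite,
        mul_zero]
      rw [Finset.sum_ite_eq' Finset.univ j (fun k => A i k * t)]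
      simp
    have hquad : ∑ i, (y i - A.mulVec b' i) ^ 2
        = ∑ i, (y i - A.mulVec btil i) ^ 2 + (2 * t * S + t ^ 2 * C) := by
      have hpt : ∀ i, (y i - A.mulVec b' i) ^ 2
          = (y i - A.mulVec btil i) ^ 2
            + (2 * t * (A i j * (A.mulVec btil i - y i)) + t ^ 2 * A i j ^ 2) := by
        intro i; rw [hmv i]; ring
      rw [Finset.sum_congr rfl fun i _ => hpt i, Finset.sum_add_distrib,
        Finset.sum_add_distrib, ← Finset.mul_sum, ← Finset.mul_sum, hS, hCdef]
    have hl1 : l1c b' T = l1c btil T + (if j ∈ T then 0 else |btil j + t| - |btil j|) := by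
      unfold l1c
      by_cases hjT : j ∈ T
      · rw [if_pos hjT, add_zero]
        exact Finset.sum_congr rfl fun k hk => by
          have hne : k ≠ j := fun h => (Finset.mem_compl.mp hk) (h ▸ hjT)
          simp [hb', hne]
      · rw [if_neg hjT]
        have hjc : j ∈ Tᶜ := Finset.mem_compl.mpr hjT
        rw [← Finset.add_sum_erase _ _ hjc, ← Finset.add_sum_erase _ (fun k => |btil k|) hjc]
        have h2 : ∑ k ∈ Tᶜ.erase j, |b' k| = ∑ k ∈ Tᶜ.erase j, |btil k| :=
          Finset.sum_congr rfl fun k hk => by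
            have hne : k ≠ j := Finset.ne_of_mem_erase hk
            simp [hb', hne]
        have h3 : |b' j| = |btil j + t| := by simp [hb']
        rw [h2, h3]; ring
    unfold objL at hobj
    rw [hquad, hl1] at hobj
    linarith
  constructor
  · intro hjT
    refine quad_zeroX S C hC fun t => ?_
    have := key t
    rwa [if_pos hjT, mul_zero, add_zero] at this
  · intro hjT
    refine quad_absX S C γ hC hγ.le fun t => ?_
    have h1 := key t
    rw [if_neg hjT] at h1
    have h2 : |btil j + t| - |btil j| ≤ |t| := by
      have := abs_sub_abs_le_abs_sub (btil j + t) (btil j)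
      simpa using this
    nlinarith

end helpersX

set_option maxHeartbeats 1000000 in
/-- RIP-based ℓ² error bound for the restricted modified-BPDN minimizer. -/
theorem stmt7 (n m : ℕ) (A : Matrix (Fin n) (Fin m) ℝ) (T Δ : Finset (Fin m))
    (hdisj : Disjoint T Δ)
    (hrank : IsUnit ((cols A (T ∪ Δ))ᵀ * cols A (T ∪ Δ)))
    (δT δΔ θ : ℝ)
    (hδT : RIP A T.card δT) (hδΔ : RIP A Δ.card δΔ)
    (hθ : ROC A T.card Δ.card θ) (hθ' : ROC A Δ.card T.card θ)
    (hδT1 : δT < 1)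
    (hpos : 0 < 1 - δΔ - θ ^ 2 / (1 - δT))
    (γ : ℝ) (hγ : 0 < γ) (y : Fin n → ℝ) (btil : Fin m → ℝ)
    (hmin : IsRestrMin A y γ T (T ∪ Δ) btil) :
    l2v (btil - lsqFull A (T ∪ Δ) y) ≤
      γ * Real.sqrt (Δ.card) * Real.sqrt (θ ^ 2 / (1 - δT) ^ 2 + 1) *
        (1 / (1 - δΔ - θ ^ 2 / (1 - δT))) := by
  classical
  set cfull := lsqFull A (T ∪ Δ) y with hcf
  set u := btil - cfull with hu
  have hδTnn := hδT.1
  have hδΔnn := hδΔ.1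
  have hθnn := hθ.1
  set D := 1 - δT with hD
  have hDpos : 0 < D := by rw [hD]; linarith
  set K := 1 - δΔ - θ ^ 2 / D with hK
  have hKpos : 0 < K := hpos
  -- normal equations
  have hsuppc : suppOn cfull (T ∪ Δ) := fun j hj => dif_neg hj
  have hsubvc : subv cfull (T ∪ Δ) = lsq A (T ∪ Δ) y := funext fun j => dif_pos j.2
  have hAc : A.mulVec cfull = (cols A (T ∪ Δ)).mulVec (lsq A (T ∪ Δ) y) := by
    rw [mulVec_suppOnX A (T ∪ Δ) cfull hsuppc, hsubvc]
  have hMsolve : ((cols A (T ∪ Δ))ᵀ * cols A (T ∪ Δ)).mulVec (lsq A (T ∪ Δ) y)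
      = (cols A (T ∪ Δ))ᵀ.mulVec y := by
    unfold lsq
    rw [Matrix.mulVec_mulVec,
      Matrix.mul_nonsing_inv _ ((Matrix.isUnit_iff_isUnit_det _).mp hrank),
      Matrix.one_mulVec]
  have hnorm : ∀ j ∈ T ∪ Δ, ∑ i, A i j * (A.mulVec cfull i - y i) = 0 := by
    intro j hj
    rw [← Matrix.mulVec_mulVec, ← hAc] at hMsolve
    have e : ∀ w : Fin n → ℝ, ((cols A (T ∪ Δ))ᵀ.mulVec w) ⟨j, hj⟩ = ∑ i, A i j * w i := by
      intro w
      simp [Matrix.mulVec, dotProduct, cols]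
    have h1 : (∑ i, A i j * A.mulVec cfull i) = ∑ i, A i j * y i := by
      have h0 := congrFun hMsolve ⟨j, hj⟩
      rwa [e, e] at h0
    have h2 : ∑ i, A i j * (A.mulVec cfull i - y i)
        = (∑ i, A i j * A.mulVec cfull i) - ∑ i, A i j * y i := by
      rw [← Finset.sum_sub_distrib]
      exact Finset.sum_congr rfl fun i _ => by ring
    rw [h2, h1, sub_self]
  -- optimality
  have humv : ∀ i, A.mulVec u i = A.mulVec btil i - A.mulVec cfull i := by
    intro i; rw [hu, Matrix.mulVec_sub]; rfl
  have hsplit : ∀ j, (∑ i, A i j * A.mulVec u i)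
      = (∑ i, A i j * (A.mulVec btil i - y i)) - ∑ i, A i j * (A.mulVec cfull i - y i) := by
    intro j
    rw [← Finset.sum_sub_distrib]
    exact Finset.sum_congr rfl fun i _ => by rw [humv i]; ring
  have hs0 : ∀ j ∈ T, (∑ i, A i j * A.mulVec u i) = 0 := by
    intro j hjT
    have hjN : j ∈ T ∪ Δ := Finset.mem_union_left _ hjT
    rw [hsplit, hnorm j hjN, sub_zero,
      (opt_condX A T Δ γ hγ y btil hmin j hjN).1 hjT]
  have hsγ : ∀ j ∈ Δ, |∑ i, A i j * A.mulVec u i| ≤ γ := by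
    intro j hjΔ
    have hjN : j ∈ T ∪ Δ := Finset.mem_union_right _ hjΔ
    have hjT : j ∉ T := fun h => (Finset.disjoint_left.mp hdisj h) hjΔ
    rw [hsplit, hnorm j hjN, sub_zero]
    exact (opt_condX A T Δ γ hγ y btil hmin j hjN).2 hjT
  -- split u
  set uT : Fin m → ℝ := fun k => if k ∈ T then u k else 0 with huT
  set uΔ : Fin m → ℝ := fun k => if k ∈ Δ then u k else 0 with huΔ
  have hsuppu : suppOn u (T ∪ Δ) := fun k hk => by
    rw [hu]
    show btil k - cfull k = 0
    rw [hmin.1 k hk, hsuppc k hk, sub_zero]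
  have hsT : suppOn uT T := fun k hk => if_neg hk
  have hsΔ : suppOn uΔ Δ := fun k hk => if_neg hk
  have husum : u = uT + uΔ := by
    funext k
    show u k = uT k + uΔ k
    by_cases h1 : k ∈ T
    · have h2 : k ∉ Δ := fun h => (Finset.disjoint_left.mp hdisj h1) h
      simp [huT, huΔ, h1, h2]
    · by_cases h2 : k ∈ Δ
      · simp [huT, huΔ, h1, h2]
      · have h3 : k ∉ T ∪ Δ := by simp [Finset.mem_union, h1, h2]
        simp [huT, huΔ, h1, h2, hsuppu k h3]
  set a := l2v uT with ha
  set b := l2v uΔ with hb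
  have ha0 : 0 ≤ a := l2v_nonnegX uT
  have hb0 : 0 ≤ b := l2v_nonnegX uΔ
  have hasq : a ^ 2 = ∑ i, uT i ^ 2 := sq_l2vX uT
  have hbsq : b ^ 2 = ∑ i, uΔ i ^ 2 := sq_l2vX uΔ
  have hAdd : A.mulVec u = A.mulVec uT + A.mulVec uΔ := by rw [husum, Matrix.mulVec_add]
  -- (i)
  have hi : dotProduct (A.mulVec uT) (A.mulVec u) = 0 := by
    rw [dot_mulVec_suppOnX A T uT hsT (A.mulVec u)]
    exact Finset.sum_eq_zero fun j hj => by rw [hs0 j hj, mul_zero]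
  -- (ii)
  have hii : dotProduct (A.mulVec uΔ) (A.mulVec u) ≤ γ * ∑ j ∈ Δ, |u j| := by
    rw [dot_mulVec_suppOnX A Δ uΔ hsΔ (A.mulVec u), Finset.mul_sum]
    refine Finset.sum_le_sum fun j hj => ?_
    have h1 : uΔ j = u j := if_pos hj
    calc uΔ j * (∑ i, A i j * A.mulVec u i)
        ≤ |uΔ j * (∑ i, A i j * A.mulVec u i)| := le_abs_self _
      _ = |u j| * |∑ i, A i j * A.mulVec u i| := by rw [abs_mul, h1]
      _ ≤ |u j| * γ := mul_le_mul_of_nonneg_left (hsγ j hj) (abs_nonneg _)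
      _ = γ * |u j| := mul_comm _ _
  -- ROC bounds
  have hROC1 : |dotProduct (A.mulVec uT) (A.mulVec uΔ)| ≤ θ * a * b :=
    hθ.2 T Δ hdisj le_rfl le_rfl uT uΔ hsT hsΔ
  have hROC2 : |dotProduct (A.mulVec uΔ) (A.mulVec uT)| ≤ θ * b * a :=
    hθ'.2 Δ T hdisj.symm le_rfl le_rfl uΔ uT hsΔ hsT
  have hdot : ∀ w : Fin n → ℝ, dotProduct w w = ∑ i, w i ^ 2 := by
    intro w; simp [dotProduct, sq]
  -- RIP bounds
  have hripT : (1 - δT) * ∑ i, uT i ^ 2 ≤ ∑ i, A.mulVec uT i ^ 2 :=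
    (hδT.2 T le_rfl uT hsT).1
  have hripΔ : (1 - δΔ) * ∑ i, uΔ i ^ 2 ≤ ∑ i, A.mulVec uΔ i ^ 2 :=
    (hδΔ.2 Δ le_rfl uΔ hsΔ).1
  -- step (1): D * a ≤ θ * b
  have hTT : dotProduct (A.mulVec uT) (A.mulVec uT)
      + dotProduct (A.mulVec uT) (A.mulVec uΔ) = 0 := by
    rw [← dotProduct_add, ← hAdd]; exact hi
  have h1 : D * a ^ 2 ≤ θ * a * b := by
    have hx := abs_le.mp hROC1
    have h2 : dotProduct (A.mulVec uT) (A.mulVec uT) ≤ θ * a * b := by linarith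
    rw [hdot] at h2
    rw [hasq, hD]
    linarith
  have hDa : D * a ≤ θ * b := by
    rcases eq_or_lt_of_le ha0 with h | h
    · rw [← h, mul_zero]
      exact mul_nonneg hθnn hb0
    · nlinarith
  -- step (2): K * b ≤ γ * sqrt |Δ|
  have hCS : ∑ j ∈ Δ, |u j| ≤ Real.sqrt (Δ.card) * b := by
    have hc1 : (∑ j ∈ Δ, |u j|) ^ 2 ≤ (Δ.card : ℝ) * ∑ j ∈ Δ, u j ^ 2 := by
      have := Finset.sum_mul_sq_le_sq_mul_sq Δ (fun _ => (1:ℝ)) (fun j => |u j|)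
      simpa [sq_abs] using this
    have hc2 : ∑ j ∈ Δ, u j ^ 2 = b ^ 2 := by
      rw [hbsq]
      refine (Finset.sum_subset (Finset.subset_univ Δ) fun k _ hk => ?_).symm.trans
        (Finset.sum_congr rfl fun k hk => ?_) |>.symm
      · rw [hsΔ k hk]; ring
      · rw [huΔ]; simp [hk]
    calc ∑ j ∈ Δ, |u j| = Real.sqrt ((∑ j ∈ Δ, |u j|) ^ 2) :=
          (Real.sqrt_sq (Finset.sum_nonneg fun j _ => abs_nonneg _)).symm
      _ ≤ Real.sqrt ((Δ.card : ℝ) * b ^ 2) := Real.sqrt_le_sqrt (by rw [← hc2]; exact hc1)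
      _ = Real.sqrt (Δ.card) * b := by
          rw [Real.sqrt_mul (Nat.cast_nonneg _), Real.sqrt_sq hb0]
  have hΔΔ : dotProduct (A.mulVec uΔ) (A.mulVec uΔ)
      ≤ γ * ∑ j ∈ Δ, |u j| + θ * b * a := by
    have hx := abs_le.mp hROC2
    have h2 : dotProduct (A.mulVec uΔ) (A.mulVec uT)
        + dotProduct (A.mulVec uΔ) (A.mulVec uΔ) = dotProduct (A.mulVec uΔ) (A.mulVec u) := by
      rw [← dotProduct_add, ← hAdd]
    linarith
  have h2 : (1 - δΔ) * b ^ 2 ≤ γ * Real.sqrt (Δ.card) * b + θ * a * b := by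
    have h3 := hΔΔ
    rw [hdot] at h3
    have h4 : γ * ∑ j ∈ Δ, |u j| ≤ γ * (Real.sqrt (Δ.card) * b) :=
      mul_le_mul_of_nonneg_left hCS hγ.le
    rw [hbsq]
    nlinarith
  have hθab : θ * a * b ≤ θ ^ 2 / D * b ^ 2 := by
    rw [div_mul_eq_mul_div, le_div_iff₀ hDpos]
    nlinarith [mul_nonneg hθnn hb0]
  have hKb : K * b ≤ γ * Real.sqrt (Δ.card) := by
    rcases eq_or_lt_of_le hb0 with h | h
    · rw [← h, mul_zero]
      exact mul_nonneg hγ.le (Real.sqrt_nonneg _)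
    · have h5 : K * b ^ 2 ≤ γ * Real.sqrt (Δ.card) * b := by rw [hK]; nlinarith
      nlinarith
  -- finish
  have husq : ∑ i, u i ^ 2 = a ^ 2 + b ^ 2 := by
    rw [hasq, hbsq, ← Finset.sum_add_distrib]
    refine Finset.sum_congr rfl fun k _ => ?_
    by_cases h1 : k ∈ T
    · have h2 : k ∉ Δ := fun h => (Finset.disjoint_left.mp hdisj h1) h
      simp [huT, huΔ, h1, h2]
    · by_cases h2 : k ∈ Δ
      · simp [huT, huΔ, h1, h2]
      · have h3 : k ∉ T ∪ Δ := by simp [Finset.mem_union, h1, h2]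
        simp [huT, huΔ, h1, h2, hsuppu k h3]
  have hasq2 : a ^ 2 ≤ θ ^ 2 / D ^ 2 * b ^ 2 := by
    rw [div_mul_eq_mul_div, le_div_iff₀ (by positivity)]
    nlinarith [mul_nonneg hθnn hb0, mul_nonneg (mul_nonneg hDpos.le ha0) (mul_nonneg hθnn hb0)]
  have hfin1 : l2v u ≤ Real.sqrt (θ ^ 2 / D ^ 2 + 1) * b := by
    have h6 : l2v u = Real.sqrt (∑ i, u i ^ 2) := rfl
    rw [h6, husq]
    calc Real.sqrt (a ^ 2 + b ^ 2)
        ≤ Real.sqrt ((θ ^ 2 / D ^ 2 + 1) * b ^ 2) := Real.sqrt_le_sqrt (by nlinarith)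
      _ = Real.sqrt (θ ^ 2 / D ^ 2 + 1) * b := by
          rw [Real.sqrt_mul (by positivity), Real.sqrt_sq hb0]
  have hbK : b ≤ γ * Real.sqrt (Δ.card) * (1 / K) := by
    rw [mul_one_div, le_div_iff₀ hKpos]
    linarith [hKb]
  calc l2v u ≤ Real.sqrt (θ ^ 2 / D ^ 2 + 1) * b := hfin1
    _ ≤ Real.sqrt (θ ^ 2 / D ^ 2 + 1) * (γ * Real.sqrt (Δ.card) * (1 / K)) :=
        mul_le_mul_of_nonneg_left hbK (Real.sqrt_nonneg _)
    _ = γ * Real.sqrt (Δ.card) * Real.sqrt (θ ^ 2 / D ^ 2 + 1) * (1 / K) := by ring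
end
end

section
/- Let T, Δ be disjoint index sets, N_e = T∪Δ, A an n×m matrix with A_{N_e} of full column rank, M = I − A_T(A_T'A_T)^{-1}A_T', y ∈ ℝⁿ, γ > 0, c the least-squares solution on N_e, and b̃ the minimizer of L(b) = (1/2)‖y − Ab‖₂² + γ‖b_{T^c}‖₁ over vectors supported on N_e. If ‖A'(y − A_{N_e}c_{N_e})‖_∞ < γ·[1 − max_{ω ∉ N_e} ‖(A_Δ'MA_Δ)^{-1}A_Δ'MA_ω‖₁], then b̃ is the unique global minimizer of L over all of ℝᵐ. -/
open Matrix Finset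

noncomputable section

variable {n m : ℕ}

set_option linter.unusedSectionVars false
set_option linter.unusedVariables false

variable {k : Type*} [Fintype k] [DecidableEq k]

lemma dot_self_nonneg (v : k → ℝ) : 0 ≤ v ⬝ᵥ v :=
  Finset.sum_nonneg fun i _ => mul_self_nonneg _

lemma eq_zero_of_dot_self (v : k → ℝ) (h : v ⬝ᵥ v = 0) : v = 0 := by
  funext i
  have := (Finset.sum_eq_zero_iff_of_nonneg (fun i _ => mul_self_nonneg (v i))).mp h i (mem_univ i)
  exact mul_self_eq_zero.mp this

lemma gram_mulVec (B : Matrix (Fin n) k ℝ) (x : k → ℝ) :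
    (Bᵀ * B).mulVec x = Bᵀ.mulVec (B.mulVec x) := by
  rw [← mulVec_mulVec]

lemma dot_transpose_mulVec (B : Matrix (Fin n) k ℝ) (z : k → ℝ) (w : Fin n → ℝ) :
    z ⬝ᵥ Bᵀ.mulVec w = (B.mulVec z) ⬝ᵥ w := by
  rw [dotProduct_mulVec, vecMul_transpose]

lemma gram_unit_of_inj (B : Matrix (Fin n) k ℝ) (h : ∀ x, B.mulVec x = 0 → x = 0) :
    IsUnit (Bᵀ * B) := by
  rw [← mulVec_injective_iff_isUnit]
  intro x y hxy
  have hz : (Bᵀ * B).mulVec (x - y) = 0 := by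
    rw [mulVec_sub, hxy, sub_self]
  have h2 : (B.mulVec (x - y)) ⬝ᵥ (B.mulVec (x - y)) = 0 := by
    have h3 := congrArg (fun v => (x - y) ⬝ᵥ v) hz
    simp only [gram_mulVec, dot_transpose_mulVec, dotProduct_zero] at h3
    exact h3
  have := h _ (eq_zero_of_dot_self _ h2)
  exact sub_eq_zero.mp this

lemma mulVec_eq_zero_of_gram_unit (B : Matrix (Fin n) k ℝ) (h : IsUnit (Bᵀ * B))
    (x : k → ℝ) (hx : B.mulVec x = 0) : x = 0 := by
  have hinv : (Bᵀ * B)⁻¹ * (Bᵀ * B) = 1 :=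
    Matrix.nonsing_inv_mul _ ((Matrix.isUnit_iff_isUnit_det _).mp h)
  calc x = ((Bᵀ * B)⁻¹ * (Bᵀ * B)).mulVec x := by rw [hinv, one_mulVec]
    _ = 0 := by rw [← mulVec_mulVec, gram_mulVec, hx, mulVec_zero, mulVec_zero]

lemma sign_mul_self' (x : ℝ) : Real.sign x * x = |x| := by
  rcases lt_trichotomy x 0 with h | h | h
  · rw [Real.sign_of_neg h, abs_of_neg h]; ring
  · simp [h]
  · rw [Real.sign_of_pos h, abs_of_pos h]; ring

lemma abs_sign_le_one (x : ℝ) : |Real.sign x| ≤ 1 := by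
  rcases Real.sign_apply_eq x with h | h | h <;> rw [h] <;> norm_num

lemma scalarB1 {ρ C : ℝ} (hC : 0 ≤ C) (h : ∀ t : ℝ, 0 ≤ -(t * ρ) + t ^ 2 / 2 * C) :
    ρ = 0 := by
  have hC1 : (0:ℝ) < C + 1 := by linarith
  set e := ρ / (C + 1) with he
  have hd : ρ = e * (C + 1) := by rw [he, div_mul_cancel₀ _ hC1.ne']
  have h1 := h e
  rw [hd] at h1
  have h2 : e ^ 2 ≤ 0 := by nlinarith [mul_nonneg (sq_nonneg e) hC]
  have h3 : e = 0 := pow_eq_zero_iff (n := 2) (by norm_num) |>.mp (le_antisymm h2 (sq_nonneg e))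
  rw [hd, h3, zero_mul]

lemma scalarB2a {ρ C γ : ℝ} (hC : 0 ≤ C) (hγ : 0 < γ)
    (h : ∀ t : ℝ, 0 ≤ -(t * ρ) + t ^ 2 / 2 * C + γ * |t|) : |ρ| ≤ γ := by
  by_contra hlt
  push_neg at hlt
  have hC1 : (0:ℝ) < C + 1 := by linarith
  set ε := (|ρ| - γ) / (C + 1) with hε
  have hεpos : 0 < ε := div_pos (by linarith) hC1
  have hd : |ρ| = ε * (C + 1) + γ := by rw [hε, div_mul_cancel₀ _ hC1.ne']; ring
  rcases le_or_gt 0 ρ with hρ | hρ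
  · have h1 := h ε
    rw [abs_of_pos hεpos] at h1
    rw [abs_of_nonneg hρ] at hd
    nlinarith [mul_pos hεpos hεpos]
  · have h1 := h (-ε)
    rw [abs_neg, abs_of_pos hεpos] at h1
    rw [abs_of_neg hρ] at hd
    nlinarith [mul_pos hεpos hεpos]

lemma scalarB2b {ρ C γ β : ℝ} (hC : 0 ≤ C) (hγ : 0 < γ) (hβ : β ≠ 0)
    (h : ∀ t : ℝ, |t| < |β| → 0 ≤ t * (γ * Real.sign β - ρ) + t ^ 2 / 2 * C) :
    ρ = γ * Real.sign β := by
  set s := γ * Real.sign β - ρ with hs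
  by_contra hne
  have hsne : s ≠ 0 := by intro h0; apply hne; rw [hs] at h0; linarith
  have hβpos : 0 < |β| := abs_pos.mpr hβ
  have hspos : 0 < |s| := abs_pos.mpr hsne
  have hC1 : (0:ℝ) < C + 1 := by linarith
  set ε := min (|β| / 2) (|s| / (C + 1)) with hε
  have hεpos : 0 < ε := lt_min (by linarith) (div_pos hspos hC1)
  have hεβ : ε < |β| := lt_of_le_of_lt (min_le_left _ _) (by linarith)
  have hεs : ε * (C + 1) ≤ |s| := by
    rw [← le_div_iff₀ hC1]; exact min_le_right _ _
  have h1 := h (-Real.sign s * ε) (by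
    rw [abs_mul, abs_neg, abs_of_pos hεpos]
    calc |Real.sign s| * ε ≤ 1 * ε := mul_le_mul_of_nonneg_right (abs_sign_le_one s) hεpos.le
      _ = ε := one_mul ε
      _ < |β| := hεβ)
  have hsgn : Real.sign s * s = |s| := sign_mul_self' s
  have hsq : Real.sign s ^ 2 = 1 := by
    rcases Real.sign_apply_eq_of_ne_zero s hsne with h' | h' <;> rw [h'] <;> norm_num
  have e1 : (-Real.sign s * ε) * s = -(ε * |s|) := by rw [← hsgn]; ring
  have e2 : (-Real.sign s * ε) ^ 2 = ε ^ 2 := by rw [neg_mul, neg_sq, mul_pow, hsq, one_mul]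
  rw [e1, e2] at h1
  nlinarith [mul_pos hεpos hεpos, mul_pos hεpos hspos]
set_option linter.unusedSectionVars false

def ext0 {m : ℕ} (S : Finset (Fin m)) (z : {j // j ∈ S} → ℝ) : Fin m → ℝ :=
  fun j => if h : j ∈ S then z ⟨j, h⟩ else 0

lemma suppOn_ext0 {m : ℕ} (S : Finset (Fin m)) (z : {j // j ∈ S} → ℝ) :
    suppOn (ext0 S z) S := fun j hj => dif_neg hj

lemma ext0_subv {m : ℕ} {S : Finset (Fin m)} {b : Fin m → ℝ} (hb : suppOn b S) :
    ext0 S (subv b S) = b := by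
  funext j
  by_cases h : j ∈ S
  · simp [ext0, subv, h]
  · simp [ext0, h, hb j h]

lemma subv_ext0 {m : ℕ} (S : Finset (Fin m)) (z : {j // j ∈ S} → ℝ) :
    subv (ext0 S z) S = z := by
  funext j
  simp [ext0, subv, j.2]

lemma cols_mulVec {n m : ℕ} (A : Matrix (Fin n) (Fin m) ℝ) (S : Finset (Fin m))
    (z : {j // j ∈ S} → ℝ) :
    (cols A S).mulVec z = A.mulVec (ext0 S z) := by
  funext i
  show ∑ j : {j // j ∈ S}, cols A S i j * z j = ∑ j : Fin m, A i j * ext0 S z j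
  rw [← Finset.sum_subset (Finset.subset_univ S)
      (fun x _ hx => by simp [ext0, hx])]
  rw [← Finset.sum_coe_sort S (fun j => A i j * ext0 S z j)]
  refine Finset.sum_congr rfl fun j _ => ?_
  simp [cols, ext0, j.2]

lemma mulVec_suppOn {n m : ℕ} (A : Matrix (Fin n) (Fin m) ℝ) {S : Finset (Fin m)}
    {b : Fin m → ℝ} (hb : suppOn b S) :
    A.mulVec b = (cols A S).mulVec (subv b S) := by
  rw [cols_mulVec, ext0_subv hb]

lemma colsT_mulVec_apply {n m : ℕ} (A : Matrix (Fin n) (Fin m) ℝ) (S : Finset (Fin m))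
    (v : Fin n → ℝ) (j : {j // j ∈ S}) :
    ((cols A S)ᵀ.mulVec v) j = (Aᵀ.mulVec v) j.1 := by
  simp [cols, Matrix.mulVec, Matrix.transpose, dotProduct]

lemma l1c_single {m : ℕ} (T : Finset (Fin m)) (b : Fin m → ℝ) {j : Fin m} (hj : j ∉ T)
    (t : ℝ) :
    l1c (b + Pi.single j t) T = l1c b T + (|b j + t| - |b j|) := by
  have hjc : j ∈ Tᶜ := Finset.mem_compl.mpr hj
  set b' : Fin m → ℝ := b + Pi.single j t with hb'
  unfold l1c
  have h1 : ∑ k ∈ Tᶜ, |b' k| - ∑ k ∈ Tᶜ, |b k|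
      = ∑ k ∈ Tᶜ, (|b' k| - |b k|) := by rw [Finset.sum_sub_distrib]
  have h2 : ∑ k ∈ Tᶜ, (|b' k| - |b k|) = |b j + t| - |b j| := by
    rw [Finset.sum_eq_single_of_mem j hjc
      (fun k _ hkj => by simp [hb', Pi.single_eq_of_ne hkj])]
    simp [hb']
  linarith

lemma sum_sq_expand {n : ℕ} (r q : Fin n → ℝ) :
    ∑ i, (r i - q i) ^ 2 = ∑ i, r i ^ 2 - 2 * ∑ i, r i * q i + ∑ i, q i ^ 2 := by
  have h : ∀ i ∈ Finset.univ, (r i - q i) ^ 2 = r i ^ 2 - 2 * (r i * q i) + q i ^ 2 :=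
    fun i _ => by ring
  rw [Finset.sum_congr rfl h, Finset.sum_add_distrib, Finset.sum_sub_distrib, ← Finset.mul_sum]

lemma objL_expand {n m : ℕ} (A : Matrix (Fin n) (Fin m) ℝ) (y : Fin n → ℝ) (γ : ℝ)
    (T : Finset (Fin m)) (btil b' : Fin m → ℝ) :
    objL A y γ T b' = objL A y γ T btil
      - ∑ i, (y i - A.mulVec btil i) * (A.mulVec b' i - A.mulVec btil i)
      + (1/2) * ∑ i, (A.mulVec b' i - A.mulVec btil i) ^ 2
      + γ * (l1c b' T - l1c btil T) := by
  unfold objL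
  have : ∀ i, (y i - A.mulVec b' i) = (y i - A.mulVec btil i) - (A.mulVec b' i - A.mulVec btil i) := by
    intro i; ring
  rw [Finset.sum_congr rfl fun i _ => by rw [this i]]
  rw [sum_sq_expand]
  ring
lemma abs_sub_abs_le_abs' (a t : ℝ) : |a + t| - |a| ≤ |t| := by
  have := abs_add_le a t
  linarith

lemma abs_shift_small {β t : ℝ} (hβ : β ≠ 0) (ht : |t| < |β|) :
    |β + t| - |β| = t * Real.sign β := by
  rcases lt_or_gt_of_ne hβ with h | h
  · have h1 : t < -β := by rw [abs_of_neg h] at ht; exact lt_of_le_of_lt (le_abs_self t) ht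
    have h2 : β + t < 0 := by linarith
    rw [Real.sign_of_neg h, abs_of_neg h, abs_of_neg h2]; ring
  · have h1 : -β < t := by
      rw [abs_of_pos h] at ht
      have := neg_abs_le t; linarith
    have h2 : 0 < β + t := by linarith
    rw [Real.sign_of_pos h, abs_of_pos h, abs_of_pos h2]; ring

lemma firstOrder {n m : ℕ} (A : Matrix (Fin n) (Fin m) ℝ) (T Δ : Finset (Fin m))
    (γ : ℝ) (hγ : 0 < γ) (y : Fin n → ℝ) (btil : Fin m → ℝ)
    (hmin : IsRestrMin A y γ T (T ∪ Δ) btil) :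
    (∀ j ∈ T, (Aᵀ.mulVec (y - A.mulVec btil)) j = 0) ∧
    (∀ j ∈ Δ, j ∉ T → |(Aᵀ.mulVec (y - A.mulVec btil)) j| ≤ γ ∧
      (btil j ≠ 0 → (Aᵀ.mulVec (y - A.mulVec btil)) j = γ * Real.sign (btil j))) := by
  obtain ⟨hsupp, hopt⟩ := hmin
  set r : Fin n → ℝ := y - A.mulVec btil with hr
  have hexp : ∀ j ∈ T ∪ Δ, ∀ t : ℝ,
      0 ≤ -(t * (Aᵀ.mulVec r) j) + t ^ 2 / 2 * (∑ i, A i j ^ 2) +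
        γ * (if j ∈ T then 0 else |btil j + t| - |btil j|) := by
    intro j hj t
    set b' : Fin m → ℝ := btil + Pi.single j t with hb'
    have hsupp' : suppOn b' (T ∪ Δ) := by
      intro k hk
      have hkj : k ≠ j := fun h => hk (h ▸ hj)
      simp [hb', hsupp k hk, Pi.single_eq_of_ne hkj]
    have hle := hopt b' hsupp'
    have hq : ∀ i, A.mulVec b' i - A.mulVec btil i = A i j * t := by
      intro i
      simp [hb', Matrix.mulVec_add, Matrix.mulVec_single]
      ring
    have hexp0 := objL_expand A y γ T btil b'
    have hsum1 : ∑ i, (y i - A.mulVec btil i) * (A.mulVec b' i - A.mulVec btil i)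
        = t * (Aᵀ.mulVec r) j := by
      have : (Aᵀ.mulVec r) j = ∑ i, A i j * r i := by
        simp [Matrix.mulVec, Matrix.transpose, dotProduct]
      rw [this, Finset.mul_sum]
      refine Finset.sum_congr rfl fun i _ => ?_
      rw [hq i]
      have : r i = y i - A.mulVec btil i := rfl
      rw [← this]; ring
    have hsum2 : ∑ i, (A.mulVec b' i - A.mulVec btil i) ^ 2 = t ^ 2 * ∑ i, A i j ^ 2 := by
      rw [Finset.mul_sum]
      refine Finset.sum_congr rfl fun i _ => ?_
      rw [hq i]; ring
    have hl1 : l1c b' T - l1c btil T = if j ∈ T then 0 else |btil j + t| - |btil j| := by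
      by_cases hjT : j ∈ T
      · rw [if_pos hjT]
        have : l1c b' T = l1c btil T := by
          unfold l1c
          refine Finset.sum_congr rfl fun k hk => ?_
          have hkj : k ≠ j := fun h => (Finset.mem_compl.mp hk) (h ▸ hjT)
          simp [hb', Pi.single_eq_of_ne hkj]
        rw [this]; ring
      · rw [if_neg hjT, l1c_single T btil hjT t]; ring
    rw [hsum1, hsum2, hl1] at hexp0
    have : 0 ≤ objL A y γ T b' - objL A y γ T btil := by linarith
    rw [hexp0] at this
    linarith
  have hCnn : ∀ j, (0:ℝ) ≤ ∑ i, A i j ^ 2 := fun j =>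
    Finset.sum_nonneg fun i _ => sq_nonneg _
  constructor
  · intro j hjT
    refine scalarB1 (hCnn j) fun t => ?_
    have := hexp j (Finset.mem_union_left _ hjT) t
    rw [if_pos hjT] at this
    linarith
  · intro j hjΔ hjT
    have hexp' : ∀ t : ℝ, 0 ≤ -(t * (Aᵀ.mulVec r) j) + t ^ 2 / 2 * (∑ i, A i j ^ 2) +
        γ * (|btil j + t| - |btil j|) := by
      intro t
      have := hexp j (Finset.mem_union_right _ hjΔ) t
      rw [if_neg hjT] at this
      exact this
    constructor
    · refine scalarB2a (hCnn j) hγ fun t => ?_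
      have h1 := hexp' t
      have h2 : |btil j + t| - |btil j| ≤ |t| := abs_sub_abs_le_abs' _ _
      nlinarith
    · intro hb0
      refine scalarB2b (hCnn j) hγ hb0 fun t ht => ?_
      have h1 := hexp' t
      rw [abs_shift_small hb0 ht] at h1
      linarith
lemma unit_mulVec_inj {k : Type*} [Fintype k] [DecidableEq k] {Q : Matrix k k ℝ}
    (h : IsUnit Q) {w : k → ℝ} (hw : Q.mulVec w = 0) : w = 0 := by
  have hinv : Q⁻¹ * Q = 1 := Matrix.nonsing_inv_mul _ ((Matrix.isUnit_iff_isUnit_det _).mp h)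
  calc w = (Q⁻¹ * Q).mulVec w := by rw [hinv, one_mulVec]
    _ = 0 := by rw [← mulVec_mulVec, hw, mulVec_zero]

lemma ext0_zero {m : ℕ} (S : Finset (Fin m)) : ext0 S (0 : {j // j ∈ S} → ℝ) = 0 := by
  funext j; by_cases h : j ∈ S <;> simp [ext0, h]

section DualBound

variable {n m : ℕ} (A : Matrix (Fin n) (Fin m) ℝ) (T Δ : Finset (Fin m))

set_option maxHeartbeats 2000000 in
lemma dualBound (hdisj : Disjoint T Δ)
    (hrank : IsUnit ((cols A (T ∪ Δ))ᵀ * cols A (T ∪ Δ)))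
    (γ : ℝ) (hγ : 0 < γ) (y : Fin n → ℝ) (btil : Fin m → ℝ)
    (hsupp : suppOn btil (T ∪ Δ))
    (hT : ∀ j ∈ T, (Aᵀ.mulVec (y - A.mulVec btil)) j = 0)
    (hD : ∀ j ∈ Δ, |(Aᵀ.mulVec (y - A.mulVec btil)) j| ≤ γ)
    (hcond : ∀ ω, ω ∉ T ∪ Δ →
      linfv (Aᵀ.mulVec (y - (cols A (T ∪ Δ)).mulVec (lsq A (T ∪ Δ) y))) <
        γ * (1 - erc A T Δ ω)) :
    ∀ ω, ω ∉ T ∪ Δ → |(Aᵀ.mulVec (y - A.mulVec btil)) ω| < γ := by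
  intro ω hω
  set N := T ∪ Δ with hN
  set C := cols A T with hC
  set D := cols A Δ with hDm
  set CN := cols A N with hCN
  set G := CNᵀ * CN with hG
  set P := Cᵀ * C with hP
  set M := projM A T with hM
  set Sm := schur A T Δ with hSm
  set r : Fin n → ℝ := y - A.mulVec btil with hr
  -- injectivity facts
  have hGinj : ∀ z, CN.mulVec z = 0 → z = 0 := mulVec_eq_zero_of_gram_unit CN hrank
  have hNinj : ∀ v : Fin m → ℝ, suppOn v N → A.mulVec v = 0 → v = 0 := by
    intro v hv h0
    have h1 : CN.mulVec (subv v N) = 0 := by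
      rw [hCN, ← mulVec_suppOn A hv]; exact h0
    have h2 := hGinj _ h1
    rw [← ext0_subv hv, h2, ext0_zero]
  have hTinj : ∀ x, C.mulVec x = 0 → x = 0 := by
    intro x hx
    have hvsupp : suppOn (ext0 T x) N := fun j hj =>
      suppOn_ext0 T x j (fun hjT => hj (Finset.mem_union_left _ hjT))
    have h0 : A.mulVec (ext0 T x) = 0 := by rw [← cols_mulVec]; exact hx
    have hv0 := hNinj _ hvsupp h0
    funext j
    have := congrFun hv0 j.1
    simpa [ext0, j.2] using this
  have hPunit : IsUnit P := gram_unit_of_inj C hTinj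
  have hPdet := (Matrix.isUnit_iff_isUnit_det _).mp hPunit
  have hPinv : P⁻¹ * P = 1 := Matrix.nonsing_inv_mul _ hPdet
  have hMdef : M = 1 - C * P⁻¹ * Cᵀ := rfl
  have hMC : M * C = 0 := by
    rw [hMdef, Matrix.sub_mul, Matrix.one_mul, Matrix.mul_assoc (C * P⁻¹),
      ← hP, Matrix.mul_assoc C, hPinv, Matrix.mul_one, sub_self]
  have hPsymm : Pᵀ = P := by rw [hP, Matrix.transpose_mul, Matrix.transpose_transpose]
  have hMT : Mᵀ = M := by
    rw [hMdef]
    rw [Matrix.transpose_sub, Matrix.transpose_one, Matrix.transpose_mul,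
      Matrix.transpose_mul, Matrix.transpose_transpose, Matrix.transpose_nonsing_inv, hPsymm]
    rw [Matrix.mul_assoc]
  have hCtM : Cᵀ * M = 0 := by
    rw [← hMT, ← Matrix.transpose_mul, hMC, Matrix.transpose_zero]
  have hMM : M * M = M := by
    nth_rewrite 2 [hMdef]
    rw [Matrix.mul_sub, Matrix.mul_one, ← Matrix.mul_assoc, ← Matrix.mul_assoc, hMC,
      Matrix.zero_mul, Matrix.zero_mul, sub_zero]
  have hSdef : Sm = Dᵀ * M * D := rfl
  have hSsymm : Smᵀ = Sm := by
    rw [hSdef, Matrix.transpose_mul, Matrix.transpose_mul, Matrix.transpose_transpose, hMT,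
      Matrix.mul_assoc]
  have hSgram : Sm = (M * D)ᵀ * (M * D) := by
    rw [Matrix.transpose_mul, hMT, Matrix.mul_assoc, ← Matrix.mul_assoc M M D, hMM, hSdef,
      Matrix.mul_assoc]
  have hSinj : ∀ x, (M * D).mulVec x = 0 → x = 0 := by
    intro x hx
    set tv := (P⁻¹ * Cᵀ).mulVec (D.mulVec x) with htv
    have hDx : D.mulVec x = C.mulVec tv := by
      have h1 : M.mulVec (D.mulVec x) = 0 := by rw [mulVec_mulVec]; exact hx
      rw [hMdef] at h1
      rw [Matrix.sub_mulVec, Matrix.one_mulVec, Matrix.mul_assoc, ← mulVec_mulVec] at h1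
      have := sub_eq_zero.mp h1
      rw [this, htv]
    set v : Fin m → ℝ := ext0 Δ x - ext0 T tv with hv
    have hvsupp : suppOn v N := by
      intro j hj
      have h1 : j ∉ Δ := fun hh => hj (Finset.mem_union_right _ hh)
      have h2 : j ∉ T := fun hh => hj (Finset.mem_union_left _ hh)
      simp [hv, suppOn_ext0 Δ x j h1, suppOn_ext0 T tv j h2]
    have hv0 : A.mulVec v = 0 := by
      rw [hv, mulVec_sub, ← cols_mulVec, ← cols_mulVec, ← hC, ← hDm, hDx, sub_self]
    have := hNinj v hvsupp hv0
    funext j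
    have hj1 := congrFun this j.1
    have hjT : j.1 ∉ T := Finset.disjoint_right.mp hdisj j.2
    simpa [hv, ext0, j.2, hjT] using hj1
  have hSunit : IsUnit Sm := hSgram ▸ gram_unit_of_inj (M * D) hSinj
  have hSdet := (Matrix.isUnit_iff_isUnit_det _).mp hSunit
  have hSS : Sm * Sm⁻¹ = 1 := Matrix.mul_nonsing_inv _ hSdet
  -- least squares
  set c := lsq A N y with hc
  set rc : Fin n → ℝ := y - CN.mulVec c with hrc
  have hGc : G.mulVec c = CNᵀ.mulVec y := by
    rw [hc]
    show G.mulVec (G⁻¹.mulVec (CNᵀ.mulVec y)) = CNᵀ.mulVec y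
    rw [mulVec_mulVec, Matrix.mul_nonsing_inv _ ((Matrix.isUnit_iff_isUnit_det _).mp hrank),
      one_mulVec]
  have hNormal : CNᵀ.mulVec rc = 0 := by
    rw [hrc, mulVec_sub, mulVec_mulVec, ← hG, hGc, sub_self]
  -- the dual vector
  set gD : {j // j ∈ Δ} → ℝ := fun j => (Aᵀ.mulVec r) j.1 with hgD
  set u := Sm⁻¹.mulVec gD with hu
  have hSu : Sm.mulVec u = gD := by
    rw [hu, mulVec_mulVec, hSS, one_mulVec]
  set tv := (P⁻¹ * (Cᵀ * D)).mulVec u with htv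
  set wfull : Fin m → ℝ := ext0 Δ u - ext0 T tv with hw
  have hwsupp : suppOn wfull N := by
    intro j hj
    have h1 : j ∉ Δ := fun hh => hj (Finset.mem_union_right _ hh)
    have h2 : j ∉ T := fun hh => hj (Finset.mem_union_left _ hh)
    simp [hw, suppOn_ext0 Δ u j h1, suppOn_ext0 T tv j h2]
  have hMD : M * D = D - C * (P⁻¹ * (Cᵀ * D)) := by
    rw [hMdef, Matrix.sub_mul, Matrix.one_mul, Matrix.mul_assoc, Matrix.mul_assoc]
  have hAw : A.mulVec wfull = (M * D).mulVec u := by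
    have e1 : A.mulVec wfull = D.mulVec u - C.mulVec tv := by
      rw [hw, mulVec_sub, ← cols_mulVec, ← cols_mulVec, ← hC, ← hDm]
    have e2 : C.mulVec tv = (C * (P⁻¹ * (Cᵀ * D))).mulVec u := by
      rw [htv]; exact mulVec_mulVec u C _
    have e3 : (M * D).mulVec u = D.mulVec u - (C * (P⁻¹ * (Cᵀ * D))).mulVec u := by
      rw [hMD, Matrix.sub_mulVec]
    rw [e1, e2, e3]
  -- the difference vector
  set dfull : Fin m → ℝ := ext0 N c - btil with hd
  have hdsupp : suppOn dfull N := by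
    intro j hj
    simp [hd, suppOn_ext0 N c j hj, hsupp j hj]
  have hAd : A.mulVec dfull = r - rc := by
    rw [hd, mulVec_sub, ← cols_mulVec, ← hCN, hr, hrc]
    funext i; simp
  -- A'A(dfull - wfull) vanishes on N
  have hvanish : ∀ j : {j // j ∈ N}, (Aᵀ.mulVec (A.mulVec (dfull - wfull))) j.1 = 0 := by
    intro j
    have hsplit : A.mulVec (dfull - wfull) = (r - rc) - (M * D).mulVec u := by
      rw [mulVec_sub, hAd, hAw]
    rw [hsplit]
    have e1 : ∀ v1 v2 : Fin n → ℝ, Aᵀ.mulVec (v1 - v2) = Aᵀ.mulVec v1 - Aᵀ.mulVec v2 :=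
      fun v1 v2 => mulVec_sub _ _ _
    rw [e1, e1]
    have hrc0 : (Aᵀ.mulVec rc) j.1 = 0 := by
      rw [← colsT_mulVec_apply A N rc j, ← hCN, hNormal]; rfl
    rcases Finset.mem_union.mp j.2 with hjT | hjD
    · have h1 : (Aᵀ.mulVec r) j.1 = 0 := hT j.1 hjT
      have h2 : (Aᵀ.mulVec ((M * D).mulVec u)) j.1 = 0 := by
        rw [← colsT_mulVec_apply A T ((M * D).mulVec u) ⟨j.1, hjT⟩, ← hC,
          mulVec_mulVec u Cᵀ (M * D), ← Matrix.mul_assoc, hCtM, Matrix.zero_mul, zero_mulVec]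
        rfl
      simp only [Pi.sub_apply]
      rw [h1, h2, hrc0]
      ring
    · have h2 : (Aᵀ.mulVec ((M * D).mulVec u)) j.1 = (Aᵀ.mulVec r) j.1 := by
        rw [← colsT_mulVec_apply A Δ ((M * D).mulVec u) ⟨j.1, hjD⟩, ← hDm,
          mulVec_mulVec u Dᵀ (M * D), ← Matrix.mul_assoc, ← hSdef, hSu]
      simp only [Pi.sub_apply]
      rw [h2, hrc0]
      ring
  -- conclude dfull = wfull
  have hdw : dfull = wfull := by
    have hzsupp : suppOn (dfull - wfull) N := by
      intro j hj; simp [hdsupp j hj, hwsupp j hj]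
    have hGz : G.mulVec (subv (dfull - wfull) N) = 0 := by
      have e1 : CN.mulVec (subv (dfull - wfull) N) = A.mulVec (dfull - wfull) := by
        rw [hCN]; exact (mulVec_suppOn A hzsupp).symm
      funext j
      calc (G.mulVec (subv (dfull - wfull) N)) j
          = (CNᵀ.mulVec (A.mulVec (dfull - wfull))) j := by
            rw [hG, ← mulVec_mulVec, e1]
        _ = (Aᵀ.mulVec (A.mulVec (dfull - wfull))) j.1 := by
            rw [hCN]; exact colsT_mulVec_apply A N _ j
        _ = 0 := hvanish j
    have h0 := unit_mulVec_inj hrank hGz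
    have := congrArg (ext0 N) h0
    rw [ext0_subv hzsupp, ext0_zero] at this
    exact sub_eq_zero.mp this
  -- r = rc + (M*D) u
  have hkey : r = rc + (M * D).mulVec u := by
    have := hAd.symm.trans (congrArg (A.mulVec ·) hdw) |>.trans hAw
    have h2 : r - rc = (M * D).mulVec u := this
    funext i
    have := congrFun h2 i
    simp only [Pi.sub_apply] at this
    simp [Pi.add_apply, ← this]
  -- final bound
  have hsplit : (Aᵀ.mulVec r) ω = (Aᵀ.mulVec rc) ω + (Aᵀ.mulVec ((M * D).mulVec u)) ω := by
    rw [hkey]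
    rw [mulVec_add]
    rfl
  set Aw : Fin n → ℝ := fun i => A i ω with hAw2
  have ht2a : (Aᵀ.mulVec ((M * D).mulVec u)) ω = Aw ⬝ᵥ (M * D).mulVec u := rfl
  have ht2b : Aw ⬝ᵥ (M * D).mulVec u = ((M * D)ᵀ.mulVec Aw) ⬝ᵥ u := by
    rw [Matrix.dotProduct_mulVec, ← Matrix.mulVec_transpose]
  have hMDT : (M * D)ᵀ = Dᵀ * M := by rw [Matrix.transpose_mul, hMT]
  have hSinvT : (Sm⁻¹)ᵀ = Sm⁻¹ := by rw [Matrix.transpose_nonsing_inv, hSsymm]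
  have ht2d : ((Dᵀ * M).mulVec Aw) ⬝ᵥ u = (Sm⁻¹.mulVec ((Dᵀ * M).mulVec Aw)) ⬝ᵥ gD := by
    rw [hu, Matrix.dotProduct_mulVec, ← Matrix.mulVec_transpose, hSinvT]
  have ht2 : (Aᵀ.mulVec ((M * D).mulVec u)) ω
      = (Sm⁻¹.mulVec ((Dᵀ * M).mulVec Aw)) ⬝ᵥ gD := by
    rw [ht2a, ht2b, hMDT, ht2d]
  have herc : erc A T Δ ω = l1v (Sm⁻¹.mulVec ((Dᵀ * M).mulVec Aw)) := rfl
  have hbound2 : |(Sm⁻¹.mulVec ((Dᵀ * M).mulVec Aw)) ⬝ᵥ gD| ≤ γ * erc A T Δ ω := by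
    set v := Sm⁻¹.mulVec ((Dᵀ * M).mulVec Aw) with hv
    calc |v ⬝ᵥ gD| ≤ ∑ j, |v j * gD j| := Finset.abs_sum_le_sum_abs _ _
      _ ≤ ∑ j, |v j| * γ := by
          refine Finset.sum_le_sum fun j _ => ?_
          rw [abs_mul]
          exact mul_le_mul_of_nonneg_left (hD j.1 j.2) (abs_nonneg _)
      _ = γ * l1v v := by rw [l1v, ← Finset.sum_mul, mul_comm]
      _ = γ * erc A T Δ ω := by rw [herc]
  have ht1 : |(Aᵀ.mulVec rc) ω| ≤ linfv (Aᵀ.mulVec rc) := by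
    show |(Aᵀ.mulVec rc) ω| ≤ ⨆ i, |(Aᵀ.mulVec rc) i|
    exact le_ciSup (f := fun i => |(Aᵀ.mulVec rc) i|)
      (Set.Finite.bddAbove (Set.finite_range _)) ω
  have hcondω := hcond ω hω
  have habs : |(Aᵀ.mulVec r) ω| ≤ linfv (Aᵀ.mulVec rc) + γ * erc A T Δ ω := by
    rw [hsplit, ht2]
    calc |(Aᵀ.mulVec rc) ω + (Sm⁻¹.mulVec ((Dᵀ * M).mulVec Aw)) ⬝ᵥ gD|
        ≤ |(Aᵀ.mulVec rc) ω| + |(Sm⁻¹.mulVec ((Dᵀ * M).mulVec Aw)) ⬝ᵥ gD| := abs_add_le _ _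
      _ ≤ linfv (Aᵀ.mulVec rc) + γ * erc A T Δ ω := add_le_add ht1 hbound2
  nlinarith [habs, hcondω]

end DualBound

set_option maxHeartbeats 1000000 in
/-- sufficient condition for the restricted minimizer to be the
unique global minimizer. -/
theorem stmt9 (n m : ℕ) (A : Matrix (Fin n) (Fin m) ℝ) (T Δ : Finset (Fin m))
    (hdisj : Disjoint T Δ)
    (hrank : IsUnit ((cols A (T ∪ Δ))ᵀ * cols A (T ∪ Δ)))
    (γ : ℝ) (hγ : 0 < γ) (y : Fin n → ℝ) (btil : Fin m → ℝ)
    (hmin : IsRestrMin A y γ T (T ∪ Δ) btil)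
    (hcond : ∀ ω, ω ∉ T ∪ Δ →
      linfv (Aᵀ.mulVec (y - (cols A (T ∪ Δ)).mulVec (lsq A (T ∪ Δ) y))) <
        γ * (1 - erc A T Δ ω)) :
    ∀ b : Fin m → ℝ, b ≠ btil → objL A y γ T btil < objL A y γ T b := by
  intro b hb
  obtain ⟨hT, hTD⟩ := firstOrder A T Δ γ hγ y btil hmin
  have hsupp : suppOn btil (T ∪ Δ) := hmin.1
  have hD : ∀ j ∈ Δ, |(Aᵀ.mulVec (y - A.mulVec btil)) j| ≤ γ := fun j hj =>
    (hTD j hj (Finset.disjoint_right.mp hdisj hj)).1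
  have hD2 : ∀ j ∈ Δ, btil j ≠ 0 →
      (Aᵀ.mulVec (y - A.mulVec btil)) j = γ * Real.sign (btil j) := fun j hj h0 =>
    (hTD j hj (Finset.disjoint_right.mp hdisj hj)).2 h0
  have hdual := dualBound A T Δ hdisj hrank γ hγ y btil hsupp hT hD hcond
  set r : Fin n → ℝ := y - A.mulVec btil with hr
  -- injectivity on the support
  have hNinj : ∀ v : Fin m → ℝ, suppOn v (T ∪ Δ) → A.mulVec v = 0 → v = 0 := by
    intro v hv h0
    have h1 : (cols A (T ∪ Δ)).mulVec (subv v (T ∪ Δ)) = 0 := by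
      rw [← mulVec_suppOn A hv]; exact h0
    have h2 := mulVec_eq_zero_of_gram_unit _ hrank _ h1
    rw [← ext0_subv hv, h2, ext0_zero]
  -- the expansion
  have hexp := objL_expand A y γ T btil b
  have hdot : ∑ i, (y i - A.mulVec btil i) * (A.mulVec b i - A.mulVec btil i)
      = ∑ j, (Aᵀ.mulVec r) j * (b j - btil j) := by
    calc ∑ i, (y i - A.mulVec btil i) * (A.mulVec b i - A.mulVec btil i)
        = r ⬝ᵥ A.mulVec (b - btil) := by
          refine Finset.sum_congr rfl fun i _ => ?_
          rw [mulVec_sub]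
          rfl
      _ = (Aᵀ.mulVec r) ⬝ᵥ (b - btil) := by
          rw [Matrix.dotProduct_mulVec, ← Matrix.mulVec_transpose]
      _ = ∑ j, (Aᵀ.mulVec r) j * (b j - btil j) := rfl
  -- the subgradient
  set g : Fin m → ℝ := fun j =>
    if j ∈ Δ then (Aᵀ.mulVec r) j / γ else Real.sign (b j - btil j) with hg
  have hgprop : ∀ j, j ∉ T → |g j| ≤ 1 ∧ g j * btil j = |btil j| := by
    intro j hjT
    by_cases hjD : j ∈ Δ
    · have hgj : g j = (Aᵀ.mulVec r) j / γ := by rw [hg]; simp [hjD]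
      constructor
      · rw [hgj, abs_div, abs_of_pos hγ, div_le_one hγ]
        exact hD j hjD
      · by_cases h0 : btil j = 0
        · simp [h0]
        · rw [hgj, hD2 j hjD h0]
          rw [mul_comm γ, mul_div_assoc, div_self hγ.ne', mul_one, sign_mul_self']
    · have hgj : g j = Real.sign (b j - btil j) := by rw [hg]; simp [hjD]
      have h0 : btil j = 0 := hsupp j (by simp [hjT, hjD])
      constructor
      · rw [hgj]; exact abs_sign_le_one _
      · simp [h0]
  have hl1 : ∀ j, j ∉ T → |btil j| + g j * (b j - btil j) ≤ |b j| := by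
    intro j hjT
    obtain ⟨hgle, hgb⟩ := hgprop j hjT
    have h1 : g j * b j ≤ |b j| := by
      calc g j * b j ≤ |g j * b j| := le_abs_self _
        _ = |g j| * |b j| := abs_mul _ _
        _ ≤ 1 * |b j| := mul_le_mul_of_nonneg_right hgle (abs_nonneg _)
        _ = |b j| := one_mul _
    have h2 : g j * (b j - btil j) = g j * b j - g j * btil j := by ring
    linarith
  have hsum_l1 : ∑ j ∈ Tᶜ, g j * (b j - btil j) ≤ l1c b T - l1c btil T := by
    unfold l1c
    rw [← Finset.sum_sub_distrib]
    refine Finset.sum_le_sum fun j hj => ?_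
    have := hl1 j (Finset.mem_compl.mp hj)
    linarith
  -- split the dot sum over T and Tᶜ
  have hTzero : ∑ j ∈ T, (Aᵀ.mulVec r) j * (b j - btil j) = 0 :=
    Finset.sum_eq_zero fun j hj => by rw [hT j hj, zero_mul]
  have hsplitsum : ∑ j, (Aᵀ.mulVec r) j * (b j - btil j)
      = ∑ j ∈ Tᶜ, (Aᵀ.mulVec r) j * (b j - btil j) := by
    rw [← Finset.sum_add_sum_compl T (fun j => (Aᵀ.mulVec r) j * (b j - btil j)), hTzero,
      zero_add]
  -- per-term bounds
  set F : Fin m → ℝ := fun j =>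
    γ * (g j * (b j - btil j)) - (Aᵀ.mulVec r) j * (b j - btil j) with hF
  have hF0 : ∀ j ∈ Tᶜ, 0 ≤ F j := by
    intro j hj
    have hjT := Finset.mem_compl.mp hj
    by_cases hjD : j ∈ Δ
    · have hgj : g j = (Aᵀ.mulVec r) j / γ := by rw [hg]; simp [hjD]
      have : F j = 0 := by rw [hF]; simp only; rw [hgj]; field_simp; ring
      rw [this]
    · have hgj : g j = Real.sign (b j - btil j) := by rw [hg]; simp [hjD]
      have habs : (Aᵀ.mulVec r) j * (b j - btil j) ≤ |(Aᵀ.mulVec r) j| * |b j - btil j| := by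
        calc (Aᵀ.mulVec r) j * (b j - btil j) ≤ |(Aᵀ.mulVec r) j * (b j - btil j)| :=
              le_abs_self _
          _ = |(Aᵀ.mulVec r) j| * |b j - btil j| := abs_mul _ _
      have hsgn : g j * (b j - btil j) = |b j - btil j| := by rw [hgj, sign_mul_self']
      have hρ : |(Aᵀ.mulVec r) j| < γ := hdual j (by simp [hjT, hjD])
      have h2 : |(Aᵀ.mulVec r) j| * |b j - btil j| ≤ γ * |b j - btil j| :=
        mul_le_mul_of_nonneg_right hρ.le (abs_nonneg _)
      rw [hF]; simp only; rw [hsgn]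
      linarith
  have hFpos : ∀ j, j ∉ T ∪ Δ → b j - btil j ≠ 0 → 0 < F j := by
    intro j hj hd0
    have hjT : j ∉ T := fun hh => hj (Finset.mem_union_left _ hh)
    have hjD : j ∉ Δ := fun hh => hj (Finset.mem_union_right _ hh)
    have hgj : g j = Real.sign (b j - btil j) := by rw [hg]; simp [hjD]
    have hsgn : g j * (b j - btil j) = |b j - btil j| := by rw [hgj, sign_mul_self']
    have habs : (Aᵀ.mulVec r) j * (b j - btil j) ≤ |(Aᵀ.mulVec r) j| * |b j - btil j| := by
      calc (Aᵀ.mulVec r) j * (b j - btil j) ≤ |(Aᵀ.mulVec r) j * (b j - btil j)| :=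
            le_abs_self _
        _ = |(Aᵀ.mulVec r) j| * |b j - btil j| := abs_mul _ _
    have hρ : |(Aᵀ.mulVec r) j| < γ := hdual j hj
    have hdabs : 0 < |b j - btil j| := abs_pos.mpr hd0
    have h2 : |(Aᵀ.mulVec r) j| * |b j - btil j| < γ * |b j - btil j| :=
      mul_lt_mul_of_pos_right hρ hdabs
    rw [hF]; simp only; rw [hsgn]
    linarith
  -- the master inequality
  have hQnn : 0 ≤ ∑ i, (A.mulVec b i - A.mulVec btil i) ^ 2 :=
    Finset.sum_nonneg fun i _ => sq_nonneg _
  have hmaster : objL A y γ T btil + (1/2) * ∑ i, (A.mulVec b i - A.mulVec btil i) ^ 2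
      + ∑ j ∈ Tᶜ, F j ≤ objL A y γ T b := by
    have e1 : ∑ j ∈ Tᶜ, F j = γ * ∑ j ∈ Tᶜ, g j * (b j - btil j)
        - ∑ j ∈ Tᶜ, (Aᵀ.mulVec r) j * (b j - btil j) := by
      rw [Finset.mul_sum, ← Finset.sum_sub_distrib]
    have e2 : γ * ∑ j ∈ Tᶜ, g j * (b j - btil j) ≤ γ * (l1c b T - l1c btil T) :=
      mul_le_mul_of_nonneg_left hsum_l1 hγ.le
    rw [hexp, hdot, hsplitsum]
    linarith
  -- case analysis
  by_cases hcase : ∀ j, j ∉ T ∪ Δ → b j = btil j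
  · have hsuppd : suppOn (b - btil) (T ∪ Δ) := fun j hj => by
      rw [Pi.sub_apply, hcase j hj, sub_self]
    have hAne : A.mulVec (b - btil) ≠ 0 := by
      intro h0
      exact hb (sub_eq_zero.mp (hNinj _ hsuppd h0))
    obtain ⟨i0, hi0⟩ := Function.ne_iff.mp hAne
    have hi0' : A.mulVec b i0 - A.mulVec btil i0 ≠ 0 := by
      have e := congrFun (mulVec_sub A b btil) i0
      intro hc
      apply hi0
      show A.mulVec (b - btil) i0 = (0 : Fin n → ℝ) i0
      rw [e]
      simpa using hc
    have hQpos : 0 < ∑ i, (A.mulVec b i - A.mulVec btil i) ^ 2 := by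
      refine Finset.sum_pos' (fun i _ => sq_nonneg _) ⟨i0, Finset.mem_univ _, ?_⟩
      nlinarith [abs_pos.mpr hi0', abs_mul_abs_self (A.mulVec b i0 - A.mulVec btil i0)]
    have hFnn : 0 ≤ ∑ j ∈ Tᶜ, F j := Finset.sum_nonneg hF0
    linarith
  · push_neg at hcase
    obtain ⟨j0, hj0, hj0ne⟩ := hcase
    have hj0T : j0 ∈ Tᶜ := Finset.mem_compl.mpr fun hh => hj0 (Finset.mem_union_left _ hh)
    have hFsum : 0 < ∑ j ∈ Tᶜ, F j :=
      Finset.sum_pos' hF0 ⟨j0, hj0T, hFpos j0 hj0 (sub_ne_zero.mpr hj0ne)⟩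
    linarith
end
end
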